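/- The function g_L is nonnegative and increasing on (0, ∞); it extends continuously to λ = 0 with limit lim_{λ→0⁺} g_L(λ) = κ₄ − 1 + (4L+2)/(L(L−1)); and its right derivative at 0 equals lim_{λ→0⁺} [g_L(λ) − (κ₄ − 1 + (4L+2)/(L(L−1)))]/λ = (L+1)(L+2)(2L+1)/(15L(L−1)). -/

import Mathlib

open Matrix Filter

/-- `D_0 = 1`, `D_1 = 1 + λ`, `D_k = (2 + λ) D_{k-1} - D_{k-2}`. -/
noncomputable def Dseq (lam : ℝ) : ℕ → ℝ
  | 0 => 1
  | 1 => 1 + lam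
  | (k + 2) => (2 + lam) * Dseq lam (k + 1) - Dseq lam k

/-- The 2×2 matrix `V_{L,λ}`. -/
noncomputable def Vmat (L : ℕ) (lam : ℝ) : Matrix (Fin 2) (Fin 2) ℝ :=
  !![(1 - Dseq lam (L - 1) / Dseq lam L) / lam,
      (Dseq lam L - 1) / (lam * Dseq lam L);
     (Dseq lam L - 1) / (lam * Dseq lam L),
      (Dseq lam (L - 1) / Dseq lam L + lam * L - 1) / lam ^ 2]

/-- `g_L(λ) = κ₄ - 1 + (V_{L,λ}⁻¹)₁₁`. -/
noncomputable def gfun (κ₄ : ℝ) (L : ℕ) (lam : ℝ) : ℝ :=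
  κ₄ - 1 + (Vmat L lam)⁻¹ 0 0

/-- Chebyshev-U-like sequence: `C_0=0, C_1=1, C_{k+2}=(2+λ)C_{k+1}-C_k`. -/
noncomputable def Cseq (lam : ℝ) : ℕ → ℝ
  | 0 => 0
  | 1 => 1
  | (k + 2) => (2 + lam) * Cseq lam (k + 1) - Cseq lam k

noncomputable def Eseq (lam : ℝ) : ℕ → ℝ
  | 0 => 0
  | 1 => 0
  | (k + 2) => (2 + lam) * Eseq lam (k + 1) - Eseq lam k + (k + 1)

lemma Cseq_step (lam : ℝ) (k : ℕ) :
    Cseq lam (k + 2) = (2 + lam) * Cseq lam (k + 1) - Cseq lam k := rfl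

lemma Eseq_step (lam : ℝ) (k : ℕ) :
    Eseq lam (k + 2) = (2 + lam) * Eseq lam (k + 1) - Eseq lam k + (k + 1) := rfl

lemma Dseq_eq_C (lam : ℝ) : ∀ k, Dseq lam k = Cseq lam (k + 1) - Cseq lam k := by
  intro k
  induction k using Nat.twoStepInduction with
  | zero => simp [Dseq, Cseq]
  | one => simp [Dseq, Cseq]; ring
  | more k ih1 ih2 =>
    show (2 + lam) * Dseq lam (k+1) - Dseq lam k = _
    rw [ih1, ih2, Cseq_step lam (k+1), Cseq_step lam k]
    ring

lemma Cseq_zero : ∀ m, Cseq 0 m = m := by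
  intro m
  induction m using Nat.twoStepInduction with
  | zero => simp [Cseq]
  | one => simp [Cseq]
  | more k ih1 ih2 =>
    show (2 + 0) * Cseq 0 (k+1) - Cseq 0 k = _
    rw [ih1, ih2]; push_cast; ring

lemma Cseq_eq_E (lam : ℝ) : ∀ m, Cseq lam m = m + lam * Eseq lam m := by
  intro m
  induction m using Nat.twoStepInduction with
  | zero => simp [Cseq, Eseq]
  | one => simp [Cseq, Eseq]
  | more k ih1 ih2 =>
    rw [Cseq_step, Eseq_step, ih1, ih2]; push_cast; ring

lemma Eseq_zero : ∀ m, Eseq 0 m = ((m:ℝ)^3 - m) / 6 := by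
  intro m
  induction m using Nat.twoStepInduction with
  | zero => simp [Eseq]
  | one => simp [Eseq]
  | more k ih1 ih2 =>
    rw [Eseq_step, ih1, ih2]; push_cast; ring

lemma Cseq_continuous : ∀ m, Continuous fun lam => Cseq lam m := by
  intro m
  induction m using Nat.twoStepInduction with
  | zero => simpa [Cseq] using continuous_const
  | one => simpa [Cseq] using continuous_const
  | more k ih1 ih2 =>
    show Continuous fun lam => (2 + lam) * Cseq lam (k+1) - Cseq lam k
    exact ((continuous_const.add continuous_id).mul ih2).sub ih1

lemma Eseq_continuous : ∀ m, Continuous fun lam => Eseq lam m := by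
  intro m
  induction m using Nat.twoStepInduction with
  | zero => simpa [Eseq] using continuous_const
  | one => simpa [Eseq] using continuous_const
  | more k ih1 ih2 =>
    show Continuous fun lam => (2 + lam) * Eseq lam (k+1) - Eseq lam k + (k+1)
    exact (((continuous_const.add continuous_id).mul ih2).sub ih1).add continuous_const

lemma Cseq_nonneg_mono {lam : ℝ} (h : 0 ≤ lam) :
    ∀ m, 0 ≤ Cseq lam m ∧ Cseq lam m ≤ Cseq lam (m + 1) := by
  intro m
  induction m with
  | zero => constructor <;> simp [Cseq]
  | succ k ih =>
    obtain ⟨h1, h2⟩ := ih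
    have h3 : 0 ≤ Cseq lam (k+1) := le_trans h1 h2
    refine ⟨h3, ?_⟩
    show Cseq lam (k+1) ≤ (2 + lam) * Cseq lam (k+1) - Cseq lam k
    nlinarith

lemma Cseq_one_le {lam : ℝ} (h : 0 ≤ lam) {m : ℕ} (hm : 1 ≤ m) : 1 ≤ Cseq lam m := by
  induction m with
  | zero => omega
  | succ k ih =>
    rcases Nat.eq_or_lt_of_le hm with h1 | h1
    · obtain rfl : k = 0 := by omega
      norm_num [Cseq]
    · have := ih (by omega)
      exact le_trans this (Cseq_nonneg_mono h k).2

open Finset in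
noncomputable def Psum (L : ℕ) (lam : ℝ) : ℝ :=
  ∑ m ∈ range (L + 1), (m : ℝ) * Cseq lam m

open Finset in
noncomputable def Qsum (L : ℕ) (lam : ℝ) : ℝ :=
  ∑ m ∈ range (L + 1), (m : ℝ) * ((L : ℝ) - m) * Cseq lam m

open Finset in
noncomputable def Ssum (L : ℕ) (lam : ℝ) : ℝ :=
  ∑ m ∈ range (L + 1), Cseq lam m

lemma Psum_succ (L : ℕ) (lam : ℝ) :
    Psum (L + 1) lam = Psum L lam + (L + 1 : ℝ) * Cseq lam (L + 1) := by
  rw [Psum, Finset.sum_range_succ]; push_cast; rfl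

lemma Ssum_succ (L : ℕ) (lam : ℝ) :
    Ssum (L + 1) lam = Ssum L lam + Cseq lam (L + 1) := by
  rw [Ssum, Finset.sum_range_succ]; rfl

lemma Qsum_succ (L : ℕ) (lam : ℝ) :
    Qsum (L + 1) lam = Qsum L lam + Psum L lam := by
  rw [Qsum, Finset.sum_range_succ]
  push_cast
  rw [sub_self, mul_zero, zero_mul, add_zero, Qsum, Psum, ← Finset.sum_add_distrib]
  apply Finset.sum_congr rfl
  intro m hm
  push_cast
  ring

/-- I5: `λ P_L = L C_{L+1} - (L+1) C_L`. -/
lemma identity5 (L : ℕ) (lam : ℝ) :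
    lam * Psum L lam = (L : ℝ) * Cseq lam (L + 1) - (L + 1 : ℝ) * Cseq lam L := by
  induction L with
  | zero => simp [Psum, Cseq]
  | succ k ih =>
    rw [Psum_succ, Cseq_step lam k]
    push_cast
    push_cast at ih
    nlinarith [ih]

/-- I4: `λ Q_{L+1} + 2 S_L = L C_{L+1}`. -/
lemma identity4 (L : ℕ) (lam : ℝ) :
    lam * Qsum (L + 1) lam + 2 * Ssum L lam = (L : ℝ) * Cseq lam (L + 1) := by
  induction L with
  | zero =>
    simp [Qsum, Ssum, Cseq, Finset.sum_range_succ]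
  | succ k ih =>
    rw [Qsum_succ, Ssum_succ]
    have h5 := identity5 (k + 1) lam
    push_cast at h5 ⊢
    linear_combination ih + h5

/-- `D_L = 1 + λ S_L` in C-form: `C_{L+1} - C_L = 1 + λ S_L`. -/
lemma identityS (L : ℕ) (lam : ℝ) :
    Cseq lam (L + 1) - Cseq lam L = 1 + lam * Ssum L lam := by
  induction L with
  | zero => simp [Cseq, Ssum]
  | succ k ih =>
    rw [Cseq_step lam k, Ssum_succ]
    nlinarith [ih]

/-- I3: `C_L P_L - S_L² = (C_{L+1} - C_L) Q_L`. -/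
lemma identity3 (L : ℕ) (lam : ℝ) :
    Cseq lam L * Psum L lam - (Ssum L lam) ^ 2
      = (Cseq lam (L + 1) - Cseq lam L) * Qsum L lam := by
  induction L with
  | zero => simp [Cseq, Psum, Qsum, Ssum]
  | succ k ih =>
    have h4 := identity4 k lam
    have h5 := identity5 k lam
    have hS := identityS k lam
    have hq := Qsum_succ k lam
    have hp := Psum_succ k lam
    have hs := Ssum_succ k lam
    have hC := Cseq_step lam k
    have h4q : lam * (Qsum k lam + Psum k lam) + 2 * Ssum k lam = (k : ℝ) * Cseq lam (k + 1) := by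
      rw [← Qsum_succ]; exact h4
    rw [hp, hs, hq]
    linear_combination ih - (Qsum k lam + Psum k lam) * hC - Cseq lam (k + 1) * h4q

open Finset

lemma Ssum_nonneg {lam : ℝ} (h : 0 ≤ lam) (L : ℕ) : 0 ≤ Ssum L lam :=
  Finset.sum_nonneg fun m _ => (Cseq_nonneg_mono h m).1

lemma Psum_pos {lam : ℝ} (h : 0 ≤ lam) {L : ℕ} (hL : 1 ≤ L) : 0 < Psum L lam := by
  apply Finset.sum_pos'
  · intro m _
    exact mul_nonneg (Nat.cast_nonneg m) (Cseq_nonneg_mono h m).1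
  · refine ⟨1, Finset.mem_range.mpr (by omega), ?_⟩
    have := Cseq_one_le h (le_refl 1)
    push_cast
    nlinarith

lemma Qsum_pos {lam : ℝ} (h : 0 ≤ lam) {L : ℕ} (hL : 2 ≤ L) : 0 < Qsum L lam := by
  apply Finset.sum_pos'
  · intro m hm
    have hm' : (m : ℝ) ≤ (L : ℝ) := by
      have := Finset.mem_range.mp hm
      exact_mod_cast Nat.le_of_lt_succ this
    exact mul_nonneg (mul_nonneg (Nat.cast_nonneg m) (by linarith)) (Cseq_nonneg_mono h m).1
  · refine ⟨1, Finset.mem_range.mpr (by omega), ?_⟩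
    have h1 := Cseq_one_le h (le_refl 1)
    have hL' : (2 : ℝ) ≤ (L : ℝ) := by exact_mod_cast hL
    push_cast
    nlinarith

lemma cross_adj {x y : ℝ} (hx : 0 ≤ x) (hxy : x < y) :
    ∀ k, 1 ≤ k → Cseq y k * Cseq x (k + 1) < Cseq y (k + 1) * Cseq x k := by
  have hy : 0 ≤ y := le_trans hx hxy.le
  intro k hk
  induction k with
  | zero => omega
  | succ j ih =>
    rcases Nat.eq_or_lt_of_le hk with h1 | h1
    · obtain rfl : j = 0 := by omega
      show Cseq y 1 * Cseq x 2 < Cseq y 2 * Cseq x 1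
      have e1 : Cseq x 2 = 2 + x := by norm_num [Cseq_step x 0, Cseq]
      have e2 : Cseq y 2 = 2 + y := by norm_num [Cseq_step y 0, Cseq]
      simp only [Cseq, e1, e2]
      nlinarith
    · have hj : 1 ≤ j := by omega
      have ihh := ih hj
      have hyp : (1 : ℝ) ≤ Cseq y (j + 1) := Cseq_one_le hy (by omega)
      have hxp : (1 : ℝ) ≤ Cseq x (j + 1) := Cseq_one_le hx (by omega)
      rw [Cseq_step x j, Cseq_step y j]
      have hprod : 0 < (y - x) * (Cseq y (j+1) * Cseq x (j+1)) :=
        mul_pos (sub_pos.mpr hxy) (mul_pos (by linarith) (by linarith))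
      nlinarith [hprod]

lemma cross {x y : ℝ} (hx : 0 ≤ x) (hxy : x < y) {n m : ℕ} (hn : 1 ≤ n) (hnm : n < m) :
    Cseq y n * Cseq x m < Cseq y m * Cseq x n := by
  have hy : 0 ≤ y := le_trans hx hxy.le
  induction m, hnm using Nat.le_induction with
  | base => exact cross_adj hx hxy n hn
  | succ j hnj ihh =>
      have hadj := cross_adj hx hxy j (by omega)
      have hj : (1:ℝ) ≤ Cseq x j := Cseq_one_le hx (by omega)
      have hjy : (1:ℝ) ≤ Cseq y j := Cseq_one_le hy (by omega)
      have hny : (0:ℝ) < Cseq y n := by have := Cseq_one_le hy hn; linarith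
      have hnx : (0:ℝ) < Cseq x n := by have := Cseq_one_le hx hn; linarith
      have hjy1 : (1:ℝ) ≤ Cseq y (j+1) := Cseq_one_le hy (by omega)
      have hjx1 : (1:ℝ) ≤ Cseq x (j+1) := Cseq_one_le hx (by omega)
      -- want: C y n * C x (j+1) < C y (j+1) * C x n
      -- have: C y n * C x j < C y j * C x n  and  C y j * C x (j+1) < C y (j+1) * C x j
      have key : (Cseq y n * Cseq x (j+1)) * Cseq y j < (Cseq y (j+1) * Cseq x n) * Cseq y j := by
        calc (Cseq y n * Cseq x (j+1)) * Cseq y j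
            = (Cseq y j * Cseq x (j+1)) * Cseq y n := by ring
          _ < (Cseq y (j+1) * Cseq x j) * Cseq y n := by
              apply mul_lt_mul_of_pos_right hadj hny
          _ = (Cseq y n * Cseq x j) * Cseq y (j+1) := by ring
          _ < (Cseq y j * Cseq x n) * Cseq y (j+1) := by
              apply mul_lt_mul_of_pos_right ihh (by linarith)
          _ = (Cseq y (j+1) * Cseq x n) * Cseq y j := by ring
      exact lt_of_mul_lt_mul_right key (by linarith)

/-- Key monotonicity inequality: `P_L(x) Q_L(y) < P_L(y) Q_L(x)` for `0 < x < y`. -/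
lemma PQ_cross {L : ℕ} (hL : 2 ≤ L) {x y : ℝ} (hx : 0 < x) (hxy : x < y) :
    Psum L x * Qsum L y < Psum L y * Qsum L x := by
  set r := Finset.range (L + 1) with hr
  set f : ℕ → ℕ → ℝ := fun m n =>
    (m : ℝ) * Cseq y m * ((n : ℝ) * ((L : ℝ) - n) * Cseq x n)
      - (m : ℝ) * Cseq x m * ((n : ℝ) * ((L : ℝ) - n) * Cseq y n) with hf
  have hsum : ∑ m ∈ r, ∑ n ∈ r, f m n
      = Psum L y * Qsum L x - Psum L x * Qsum L y := by
    rw [Psum, Psum, Qsum, Qsum, Finset.sum_mul_sum, Finset.sum_mul_sum,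
      ← Finset.sum_sub_distrib]
    apply Finset.sum_congr rfl
    intro m _
    rw [← Finset.sum_sub_distrib]
  -- termwise nonnegativity of symmetrized sum
  have hkey : ∀ m n : ℕ, 1 ≤ n → n < m → 0 < f m n + f n m := by
    intro m n hn hnm
    have h1 : f m n + f n m
        = ((m : ℝ) * ((n : ℝ) * ((L : ℝ) - n)) - (n : ℝ) * ((m : ℝ) * ((L : ℝ) - m)))
          * (Cseq y m * Cseq x n - Cseq y n * Cseq x m) := by
      rw [hf]; ring
    rw [h1]
    apply mul_pos
    · have hmn : (n : ℝ) < (m : ℝ) := by exact_mod_cast hnm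
      have hn' : (1 : ℝ) ≤ (n : ℝ) := by exact_mod_cast hn
      have he : (m : ℝ) * ((n : ℝ) * ((L : ℝ) - n)) - (n : ℝ) * ((m : ℝ) * ((L : ℝ) - m))
          = (m : ℝ) * n * ((m : ℝ) - n) := by ring
      rw [he]
      apply mul_pos (mul_pos (by linarith) (by linarith)) (by linarith)
    · have := cross hx.le hxy hn hnm
      linarith
  have hzero : ∀ m n : ℕ, n = 0 ∨ m = n → f m n + f n m = 0 := by
    intro m n h
    rcases h with h | h
    · subst h; rw [hf]; push_cast; simp [Cseq]
    · subst h; rw [hf]; ring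
  have hnonneg : ∀ m ∈ r, ∀ n ∈ r, 0 ≤ f m n + f n m := by
    intro m _ n _
    rcases Nat.lt_trichotomy m n with h | h | h
    · rcases Nat.eq_zero_or_pos m with h0 | h0
      · have : f n m + f m n = 0 := hzero n m (Or.inl h0)
        linarith
      · have := hkey n m h0 h
        linarith
    · exact le_of_eq (hzero m n (Or.inr h)).symm
    · rcases Nat.eq_zero_or_pos n with h0 | h0
      · exact le_of_eq (hzero m n (Or.inl h0)).symm
      · exact (hkey m n h0 h).le
  have hpos : 0 < ∑ m ∈ r, ∑ n ∈ r, (f m n + f n m) := by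
    apply Finset.sum_pos'
    · intro m hm
      exact Finset.sum_nonneg fun n hn => hnonneg m hm n hn
    · refine ⟨2, Finset.mem_range.mpr (by omega), ?_⟩
      apply Finset.sum_pos'
      · intro n hn
        exact hnonneg 2 (Finset.mem_range.mpr (by omega)) n hn
      · exact ⟨1, Finset.mem_range.mpr (by omega),
          hkey 2 1 le_rfl (by omega)⟩
  have hcomm : ∑ m ∈ r, ∑ n ∈ r, f n m = ∑ m ∈ r, ∑ n ∈ r, f m n := Finset.sum_comm
  have hsplit : ∑ m ∈ r, ∑ n ∈ r, (f m n + f n m)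
      = (∑ m ∈ r, ∑ n ∈ r, f m n) + ∑ m ∈ r, ∑ n ∈ r, f n m := by
    rw [← Finset.sum_add_distrib]
    apply Finset.sum_congr rfl
    intro m _
    rw [← Finset.sum_add_distrib]
  rw [hsplit, hcomm] at hpos
  nlinarith [hsum, hpos]

lemma Dseq_pos {lam : ℝ} (h : 0 ≤ lam) (L : ℕ) : 0 < Dseq lam L := by
  rw [Dseq_eq_C, identityS]
  have := Ssum_nonneg h L
  nlinarith

lemma gfun_eq (κ₄ : ℝ) {L : ℕ} (hL : 2 ≤ L) {lam : ℝ} (hlam : 0 < lam) :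
    gfun κ₄ L lam = κ₄ - 1 + Psum L lam / Qsum L lam := by
  obtain ⟨M, rfl⟩ : ∃ M, L = M + 2 := ⟨L - 2, by omega⟩
  have hsub : M + 2 - 1 = M + 1 := rfl
  have hlne : lam ≠ 0 := ne_of_gt hlam
  have hD : 0 < Dseq lam (M + 2) := Dseq_pos hlam.le _
  have hDne : Dseq lam (M + 2) ≠ 0 := ne_of_gt hD
  have hQ : 0 < Qsum (M + 2) lam := Qsum_pos hlam.le hL
  have hQne : Qsum (M + 2) lam ≠ 0 := ne_of_gt hQ
  -- basic identities
  have hd : Dseq lam (M + 2) = Cseq lam (M + 3) - Cseq lam (M + 2) := Dseq_eq_C lam (M + 2)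
  have he : Dseq lam (M + 1) = Cseq lam (M + 2) - Cseq lam (M + 1) := Dseq_eq_C lam (M + 1)
  have hI1 : Dseq lam (M + 1) + (lam * ((M : ℝ) + 2) - 1) * Dseq lam (M + 2)
      = lam ^ 2 * Psum (M + 2) lam := by
    have h5 := identity5 (M + 2) lam
    push_cast at h5
    have hC := Cseq_step lam (M + 1)
    rw [hd, he]
    linear_combination (-lam) * h5 - hC
  have hS : Dseq lam (M + 2) - 1 = lam * Ssum (M + 2) lam := by
    rw [hd]; linear_combination identityS (M + 2) lam
  have hI3 : Cseq lam (M + 2) * Psum (M + 2) lam - (Ssum (M + 2) lam) ^ 2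
      = Dseq lam (M + 2) * Qsum (M + 2) lam := by
    rw [hd]; exact identity3 (M + 2) lam
  have hCL : Dseq lam (M + 2) - Dseq lam (M + 1) = lam * Cseq lam (M + 2) := by
    rw [hd, he]; linear_combination Cseq_step lam (M + 1)
  -- determinant
  have hdet : (Vmat (M + 2) lam).det = Qsum (M + 2) lam / Dseq lam (M + 2) := by
    rw [Vmat, Matrix.det_fin_two_of, hsub]
    field_simp
    push_cast
    linear_combination (1 : ℝ) *
      ( (Dseq lam (M+2) - Dseq lam (M+1)) * hI1
        + lam^2 * Psum (M+2) lam * hCL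
        - lam * ((Dseq lam (M+2) - 1) + lam * Ssum (M+2) lam) * hS
        + lam^3 * hI3 )
  -- inverse entry
  have hdetne : (Vmat (M + 2) lam).det ≠ 0 := by
    rw [hdet]; positivity
  have hinv : (Vmat (M + 2) lam)⁻¹ 0 0 = Psum (M + 2) lam / Qsum (M + 2) lam := by
    rw [Matrix.inv_def, Matrix.adjugate_fin_two, Ring.inverse_eq_inv']
    rw [Matrix.smul_apply, hdet]
    have hV11 : Vmat (M + 2) lam 1 1
        = (Dseq lam (M + 1) / Dseq lam (M + 2) + lam * ((M : ℝ) + 2) - 1) / lam ^ 2 := by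
      rw [Vmat, hsub]
      norm_num
    have h00 : !![Vmat (M+2) lam 1 1, -Vmat (M+2) lam 0 1;
        -Vmat (M+2) lam 1 0, Vmat (M+2) lam 0 0] 0 0 = Vmat (M+2) lam 1 1 := by
      simp
    rw [h00, hV11, smul_eq_mul]
    field_simp
    linear_combination hI1
  rw [gfun, hinv]

lemma sum_pow2 (N : ℕ) : ∑ m ∈ range (N + 1), (m : ℝ) ^ 2
    = N * (N + 1) * (2 * N + 1) / 6 := by
  induction N with
  | zero => simp
  | succ k ih => rw [Finset.sum_range_succ, ih]; push_cast; ring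

lemma sum_pow3 (N : ℕ) : ∑ m ∈ range (N + 1), (m : ℝ) ^ 3
    = (N : ℝ) ^ 2 * (N + 1) ^ 2 / 4 := by
  induction N with
  | zero => simp
  | succ k ih => rw [Finset.sum_range_succ, ih]; push_cast; ring

lemma sum_pow4 (N : ℕ) : ∑ m ∈ range (N + 1), (m : ℝ) ^ 4
    = (N : ℝ) * (N + 1) * (2 * N + 1) * (3 * N ^ 2 + 3 * N - 1) / 30 := by
  induction N with
  | zero => simp
  | succ k ih => rw [Finset.sum_range_succ, ih]; push_cast; ring

lemma sum_pow5 (N : ℕ) : ∑ m ∈ range (N + 1), (m : ℝ) ^ 5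
    = (N : ℝ) ^ 2 * (N + 1) ^ 2 * (2 * N ^ 2 + 2 * N - 1) / 12 := by
  induction N with
  | zero => simp
  | succ k ih => rw [Finset.sum_range_succ, ih]; push_cast; ring

noncomputable def Ptil (L : ℕ) (lam : ℝ) : ℝ :=
  ∑ m ∈ range (L + 1), (m : ℝ) * Eseq lam m

noncomputable def Qtil (L : ℕ) (lam : ℝ) : ℝ :=
  ∑ m ∈ range (L + 1), (m : ℝ) * ((L : ℝ) - m) * Eseq lam m

lemma Psum_decomp (L : ℕ) (lam : ℝ) : Psum L lam = Psum L 0 + lam * Ptil L lam := by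
  rw [Psum, Psum, Ptil, Finset.mul_sum, ← Finset.sum_add_distrib]
  apply Finset.sum_congr rfl
  intro m _
  rw [Cseq_eq_E lam m, Cseq_zero m]
  ring

lemma Qsum_decomp (L : ℕ) (lam : ℝ) : Qsum L lam = Qsum L 0 + lam * Qtil L lam := by
  rw [Qsum, Qsum, Qtil, Finset.mul_sum, ← Finset.sum_add_distrib]
  apply Finset.sum_congr rfl
  intro m _
  rw [Cseq_eq_E lam m, Cseq_zero m]
  ring

lemma Psum_zero (L : ℕ) : Psum L 0 = (L : ℝ) * (L + 1) * (2 * L + 1) / 6 := by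
  rw [Psum, ← sum_pow2]
  exact Finset.sum_congr rfl fun m _ => by rw [Cseq_zero m]; ring

lemma Qsum_zero (L : ℕ) :
    Qsum L 0 = (L : ℝ) * ((L : ℝ) * (L + 1) * (2 * L + 1) / 6) - (L : ℝ) ^ 2 * (L + 1) ^ 2 / 4 := by
  rw [Qsum, ← sum_pow2, ← sum_pow3, Finset.mul_sum, ← Finset.sum_sub_distrib]
  exact Finset.sum_congr rfl fun m _ => by rw [Cseq_zero m]; ring

lemma Ptil_zero (L : ℕ) :
    Ptil L 0 = ((L:ℝ) * (L + 1) * (2 * L + 1) * (3 * L ^ 2 + 3 * L - 1) / 30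
      - (L:ℝ) * (L + 1) * (2 * L + 1) / 6) / 6 := by
  rw [Ptil]
  have h : ∀ m ∈ range (L + 1), (m : ℝ) * Eseq 0 m = ((m:ℝ)^4 - (m:ℝ)^2) / 6 := by
    intro m _; rw [Eseq_zero m]; ring
  rw [Finset.sum_congr rfl h, ← Finset.sum_div, Finset.sum_sub_distrib, sum_pow4, sum_pow2]

lemma Qtil_zero (L : ℕ) :
    Qtil L 0 = ((L:ℝ) * ((L:ℝ) * (L + 1) * (2 * L + 1) * (3 * L ^ 2 + 3 * L - 1) / 30
        - (L:ℝ) * (L + 1) * (2 * L + 1) / 6)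
      - ((L : ℝ) ^ 2 * (L + 1) ^ 2 * (2 * L ^ 2 + 2 * L - 1) / 12
        - (L : ℝ) ^ 2 * (L + 1) ^ 2 / 4)) / 6 := by
  rw [Qtil]
  have : ∀ m ∈ range (L + 1), (m : ℝ) * ((L : ℝ) - m) * Eseq 0 m
      = ((L:ℝ) * ((m:ℝ)^4 - (m:ℝ)^2) - ((m:ℝ)^5 - (m:ℝ)^3)) / 6 := by
    intro m _
    rw [Eseq_zero m]; ring
  rw [Finset.sum_congr rfl this, ← Finset.sum_div]
  rw [Finset.sum_sub_distrib, ← Finset.mul_sum, Finset.sum_sub_distrib, Finset.sum_sub_distrib]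
  rw [sum_pow2, sum_pow3, sum_pow4, sum_pow5]

lemma Ptil_continuous (L : ℕ) : Continuous (Ptil L) := by
  apply continuous_finset_sum
  intro m _
  exact continuous_const.mul (Eseq_continuous m)

lemma Qtil_continuous (L : ℕ) : Continuous (Qtil L) := by
  apply continuous_finset_sum
  intro m _
  exact continuous_const.mul (Eseq_continuous m)

lemma Psum_continuous (L : ℕ) : Continuous (Psum L) := by
  apply continuous_finset_sum
  intro m _
  exact continuous_const.mul (Cseq_continuous m)

lemma Qsum_continuous (L : ℕ) : Continuous (Qsum L) := by
  apply continuous_finset_sum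
  intro m _
  exact continuous_const.mul (Cseq_continuous m)


theorem gfun_monotone_limit_derivative
    (κ₄ : ℝ) (hκ : 1 ≤ κ₄) (L : ℕ) (hL : 2 ≤ L) :
    (∀ lam : ℝ, 0 < lam → 0 ≤ gfun κ₄ L lam) ∧
    StrictMonoOn (gfun κ₄ L) (Set.Ioi (0 : ℝ)) ∧
    Tendsto (gfun κ₄ L) (nhdsWithin 0 (Set.Ioi (0 : ℝ)))
      (nhds (κ₄ - 1 + (4 * L + 2) / (L * (L - 1)))) ∧
    Tendsto (fun lam => (gfun κ₄ L lam - (κ₄ - 1 + (4 * L + 2) / (L * (L - 1)))) / lam)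
      (nhdsWithin 0 (Set.Ioi (0 : ℝ)))
      (nhds ((L + 1) * (L + 2) * (2 * L + 1) / (15 * L * (L - 1)))) := by
  have hx : (2:ℝ) ≤ (L:ℝ) := by exact_mod_cast hL
  have hQ0 : 0 < Qsum L 0 := Qsum_pos le_rfl hL
  have hQ0ne : Qsum L 0 ≠ 0 := ne_of_gt hQ0
  have hdenpos : (0:ℝ) < (L:ℝ) * ((L:ℝ) - 1) := by nlinarith
  have hval : Psum L 0 / Qsum L 0 = (4 * (L:ℝ) + 2) / ((L:ℝ) * ((L:ℝ) - 1)) := by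
    rw [div_eq_div_iff hQ0ne (ne_of_gt hdenpos), Psum_zero, Qsum_zero]
    ring
  refine ⟨?_, ?_, ?_, ?_⟩
  · -- nonnegativity
    intro lam hlam
    rw [gfun_eq κ₄ hL hlam]
    have hP := Psum_pos hlam.le (by omega : 1 ≤ L)
    have hQ := Qsum_pos hlam.le hL
    have := div_pos hP hQ
    linarith
  · -- strict monotonicity
    intro x hxx y hyy hxy
    rw [gfun_eq κ₄ hL hxx, gfun_eq κ₄ hL hyy]
    apply add_lt_add_right
    rw [div_lt_div_iff₀ (Qsum_pos (le_of_lt hxx) hL) (Qsum_pos (le_of_lt hyy) hL)]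
    exact PQ_cross hL hxx hxy
  · -- limit at 0
    have hcont : ContinuousAt (fun lam => κ₄ - 1 + Psum L lam / Qsum L lam) 0 :=
      continuousAt_const.add
        (((Psum_continuous L).continuousAt).div ((Qsum_continuous L).continuousAt) hQ0ne)
    have hG : Tendsto (fun lam => κ₄ - 1 + Psum L lam / Qsum L lam)
        (nhdsWithin 0 (Set.Ioi (0:ℝ))) (nhds (κ₄ - 1 + Psum L 0 / Qsum L 0)) :=
      hcont.tendsto.mono_left nhdsWithin_le_nhds
    rw [hval] at hG
    apply hG.congr'
    filter_upwards [self_mem_nhdsWithin] with lam hlam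
    exact (gfun_eq κ₄ hL hlam).symm
  · -- derivative at 0
    set G4 : ℝ → ℝ := fun lam =>
      (Ptil L lam * Qsum L 0 - Psum L 0 * Qtil L lam) / (Qsum L lam * Qsum L 0) with hG4def
    have hcont : ContinuousAt G4 0 := by
      apply ContinuousAt.div
      · exact (((Ptil_continuous L).mul continuous_const).sub
          (continuous_const.mul (Qtil_continuous L))).continuousAt
      · exact ((Qsum_continuous L).mul continuous_const).continuousAt
      · exact mul_ne_zero hQ0ne hQ0ne
    have hG40 : G4 0 = ((L:ℝ) + 1) * ((L:ℝ) + 2) * (2 * (L:ℝ) + 1) / (15 * (L:ℝ) * ((L:ℝ) - 1)) := by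
      rw [hG4def]
      show (Ptil L 0 * Qsum L 0 - Psum L 0 * Qtil L 0) / (Qsum L 0 * Qsum L 0) = _
      have h15 : (0:ℝ) < 15 * (L:ℝ) * ((L:ℝ) - 1) := by nlinarith
      rw [div_eq_div_iff (mul_ne_zero hQ0ne hQ0ne) (ne_of_gt h15),
        Ptil_zero, Qtil_zero, Psum_zero, Qsum_zero]
      ring
    have hG : Tendsto G4 (nhdsWithin 0 (Set.Ioi (0:ℝ)))
        (nhds (((L:ℝ) + 1) * ((L:ℝ) + 2) * (2 * (L:ℝ) + 1) / (15 * (L:ℝ) * ((L:ℝ) - 1)))) := by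
      rw [← hG40]
      exact hcont.tendsto.mono_left nhdsWithin_le_nhds
    apply hG.congr'
    filter_upwards [self_mem_nhdsWithin] with lam hlam
    have hQl : 0 < Qsum L lam := Qsum_pos (le_of_lt hlam) hL
    have hkey : Psum L lam * Qsum L 0 - Psum L 0 * Qsum L lam
        = lam * (Ptil L lam * Qsum L 0 - Psum L 0 * Qtil L lam) := by
      rw [Psum_decomp L lam, Qsum_decomp L lam]; ring
    rw [hG4def]
    show (Ptil L lam * Qsum L 0 - Psum L 0 * Qtil L lam) / (Qsum L lam * Qsum L 0)
      = (gfun κ₄ L lam - (κ₄ - 1 + (4 * (L:ℝ) + 2) / ((L:ℝ) * ((L:ℝ) - 1)))) / lam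
    rw [gfun_eq κ₄ hL hlam, ← hval]
    have hlne : lam ≠ 0 := ne_of_gt hlam
    field_simp
    linear_combination (-1 : ℝ) * hkey
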